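/- Suppose the Randers spray satisfies G̃^i = Ĝ^i (spray of α), the Euclidean-projectivity equation G̃^i = (1/F̃)(∂F̃/∂z^k)η^k η^i holds, F̃ = α + |β| with ∂F̃/∂z^k = ∂α/∂z^k + ∂|β|/∂z^k, and moreover the generalized Berwald identity gives (∂|β|/∂z^k)η^k = (1/(2|β|))(2β̄ Ĝ^l b_l) along the relevant curves (i.e. (δ_k|β|)η^k = 0). Then contracting G̃^i = Ĝ^i with b_i yields Ĝ^i b_i = (β/α)(∂α/∂z^k)η^k, and substituting back gives Ĝ^i = (1/α)(∂α/∂z^k)η^k η^i, i.e. α is projectively related to the Euclidean metric. -/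

import Mathlib

open Complex BigOperators

/-- algebraic heart of the converse of Theorem 4.4: if `G̃^i = Ĝ^i`,
`G̃^i = (1/F̃)(∂F̃/∂z^k)η^k η^i` with `F̃ = α + |β|`, and
`(∂F̃/∂z^k)η^k = (∂α/∂z^k)η^k + (1/(2|β|)) · 2β̄ Ĝ^l b_l`, then contracting with `b_i`
gives `Ĝ^i b_i = (β/α)(∂α/∂z^k)η^k` and hence `Ĝ^i = (1/α)(∂α/∂z^k)η^k η^i`. -/
theorem randers_euclidean_projectivity {n : ℕ}
    (α : ℝ) (η b Ghat Gt dF dα : Fin n → ℂ)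
    (hα : 0 < α)
    (hβ : (∑ i, b i * η i) ≠ 0)
    (hGtG : ∀ i, Gt i = Ghat i)
    (hproj : ∀ i, Gt i
      = (1 / ((α + ‖∑ i, b i * η i‖ : ℝ) : ℂ)) * (∑ k, dF k * η k) * η i)
    (hdF : ∑ k, dF k * η k
      = (∑ k, dα k * η k)
        + (1 / (2 * ((‖∑ i, b i * η i‖ : ℝ) : ℂ))) *
            (2 * (starRingEnd ℂ) (∑ i, b i * η i) * ∑ l, Ghat l * b l)) :
    (∑ i, Ghat i * b i = ((∑ i, b i * η i) / (α : ℂ)) * ∑ k, dα k * η k) ∧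
    (∀ i, Ghat i = (1 / (α : ℂ)) * (∑ k, dα k * η k) * η i) := by
  set β : ℂ := ∑ i, b i * η i with hβdef
  set r : ℝ := ‖β‖ with hrdef
  have hr0 : 0 < r := norm_pos_iff.mpr hβ
  have hr0' : (r : ℂ) ≠ 0 := by exact_mod_cast hr0.ne'
  have hα0 : (α : ℂ) ≠ 0 := by exact_mod_cast hα.ne'
  have hc0 : ((α + r : ℝ) : ℂ) ≠ 0 := by exact_mod_cast (by positivity : (0:ℝ) < α + r).ne'
  set S : ℂ := ∑ k, dF k * η k with hSdef
  set A : ℂ := ∑ k, dα k * η k with hAdef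
  set X : ℂ := ∑ i, Ghat i * b i with hXdef
  have hG : ∀ i, Ghat i = (1 / ((α + r : ℝ) : ℂ)) * S * η i := fun i => by
    rw [← hGtG i]; exact hproj i
  have hXc : X * ((α + r : ℝ) : ℂ) = S * β := by
    rw [hXdef, Finset.sum_mul]
    rw [hβdef, Finset.mul_sum]
    apply Finset.sum_congr rfl
    intro i _
    have hci : (1/((α+r:ℝ):ℂ)) * ((α+r:ℝ):ℂ) = 1 := one_div_mul_cancel hc0
    rw [hG i]
    linear_combination (S * η i * b i) * hci
  have hconj : (starRingEnd ℂ) β * β = (r : ℂ) * (r : ℂ) := by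
    rw [mul_comm, Complex.mul_conj, Complex.normSq_eq_norm_sq, ← hrdef]
    push_cast
    ring
  have hS : S * ((r : ℂ) * 2) = A * ((r : ℂ) * 2) + 2 * (starRingEnd ℂ) β * X := by
    have := hdF
    field_simp at this
    linear_combination 2 * this
  -- X * (α+r) * r * 2 = S * β * r * 2 = (A*r*2 + 2 conj β X) * β = A r 2 β + 2 r² X
  have hXα : X * (α : ℂ) = A * β := by
    have h1 : X * ((α + r : ℝ) : ℂ) * ((r:ℂ) * 2) = S * ((r:ℂ)*2) * β := by
      rw [hXc]; ring
    rw [hS] at h1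
    have hcast : ((α + r : ℝ) : ℂ) = (α : ℂ) + (r : ℂ) := by push_cast; ring
    rw [hcast] at h1
    have h2 : X * (α:ℂ) * ((r:ℂ)*2) = A * β * ((r:ℂ)*2) := by
      linear_combination h1 + 2 * X * hconj
    have := mul_right_cancel₀ (by simp [hr0']) h2
    exact this
  constructor
  · field_simp
    linear_combination hXα
  · intro i
    rw [hG i]
    have hScomp : S * (α : ℂ) = A * ((α + r : ℝ) : ℂ) := by
      have h1 : S * ((r:ℂ)*2) * (α:ℂ) = A * ((r:ℂ)*2) * (α:ℂ) + 2 * (starRingEnd ℂ) β * (A * β) := by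
        rw [← hXα]; linear_combination (α:ℂ) * hS
      have hcast : ((α + r : ℝ) : ℂ) = (α : ℂ) + (r : ℂ) := by push_cast; ring
      rw [hcast]
      have h2 : S * (α:ℂ) * ((r:ℂ)*2) = A * ((α:ℂ)+(r:ℂ)) * ((r:ℂ)*2) := by
        linear_combination h1 + 2 * A * hconj
      exact mul_right_cancel₀ (by simp [hr0']) h2
    have hSval : S = A * ((α + r : ℝ) : ℂ) / (α : ℂ) := by
      rw [eq_div_iff hα0]; linear_combination hScomp
    rw [hSval]
    have hc0' : ((α:ℂ) + (r:ℂ)) ≠ 0 := by push_cast at hc0; exact hc0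
    field_simp
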